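/- arXiv:2506.01098 — 4 statements merged into one kernel-verified Lean document; each statement's English description precedes it below -/
import Mathlib

section
/- Let κ be a Markov kernel on a measurable space Θ, let A ⊆ Θ be measurable, and suppose there is ρ ∈ (0, 1] such that κ(θ, A) ≥ ρ for every θ ∈ Θ. Let P_θ denote the trajectory measure on Θ^ℕ of the Markov chain with transition kernel κ started at θ (Ionescu–Tulcea construction). Then for every initial point θ, P_θ({ω : the set {n ∈ ℕ : ω_n ∈ A} is infinite}) = 1; that is, the chain visits A infinitely often almost surely from every starting point (the set A is Harris recurrent). -/
open MeasureTheory ProbabilityTheory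

/-- `IsTrajectoryMeasure κ P` says that `P θ` is the law on the sequence space `ℕ → Θ` of
the Markov chain with transition kernel `κ` started at `θ` (the measure produced by the
Ionescu–Tulcea construction): each `P θ` is a probability measure, the chain starts at `θ`
almost surely, and the finite-dimensional distributions satisfy the Markov recursion
`P θ {ω | ∀ k ≤ n+1, ω k ∈ B k} = ∫_{ {ω | ∀ k ≤ n, ω k ∈ B k} } κ (ω n) (B (n+1)) ∂(P θ)`. -/
structure IsTrajectoryMeasure {Θ : Type*} [MeasurableSpace Θ]
    (κ : ProbabilityTheory.Kernel Θ Θ) (P : Θ → Measure (ℕ → Θ)) : Prop where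
  isProb : ∀ θ, IsProbabilityMeasure (P θ)
  start : ∀ θ, P θ {ω | ω 0 = θ} = 1
  markov : ∀ (θ : Θ) (n : ℕ) (B : ℕ → Set Θ), (∀ k, MeasurableSet (B k)) →
    P θ {ω | ∀ k ≤ n + 1, ω k ∈ B k}
      = ∫⁻ ω in {ω | ∀ k ≤ n, ω k ∈ B k}, κ (ω n) (B (n + 1)) ∂(P θ)

theorem visits_infinitely_often_of_minorization'
    {Θ : Type*} [MeasurableSpace Θ]
    (κ : ProbabilityTheory.Kernel Θ Θ) [IsMarkovKernel κ]
    (A : Set Θ) (hA : MeasurableSet A)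
    (ρ : ℝ) (hρpos : 0 < ρ) (hρle : ρ ≤ 1)
    (hmin : ∀ θ : Θ, ENNReal.ofReal ρ ≤ κ θ A)
    (P : Θ → Measure (ℕ → Θ))
    (isProb : ∀ θ, IsProbabilityMeasure (P θ))
    (markov : ∀ (θ : Θ) (n : ℕ) (B : ℕ → Set Θ), (∀ k, MeasurableSet (B k)) →
      P θ {ω | ∀ k ≤ n + 1, ω k ∈ B k}
        = ∫⁻ ω in {ω | ∀ k ≤ n, ω k ∈ B k}, κ (ω n) (B (n + 1)) ∂(P θ)) :
    ∀ θ : Θ, P θ {ω | {n : ℕ | ω n ∈ A}.Infinite} = 1 := by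
  intro θ
  haveI := isProb θ
  set ε := ENNReal.ofReal ρ with hε
  have hε0 : 0 < ε := ENNReal.ofReal_pos.2 hρpos
  have hεle : ε ≤ 1 := by
    rw [hε, ← ENNReal.ofReal_one]; exact ENNReal.ofReal_le_ofReal hρle
  set B : ℕ → ℕ → Set Θ := fun m k => if m < k then Aᶜ else Set.univ with hB
  have hBmeas : ∀ m k, MeasurableSet (B m k) := by
    intro m k; by_cases h : m < k <;> simp [hB, h, hA.compl]
  -- key estimate
  have key : ∀ m N, P θ {ω | ∀ k ≤ m + N, ω k ∈ B m k} ≤ (1 - ε) ^ N := by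
    intro m N
    induction N with
    | zero => simpa using prob_le_one
    | succ N ih =>
      have h1 : m + (N + 1) = (m + N) + 1 := by ring
      rw [h1, markov θ (m + N) (B m) (hBmeas m)]
      have hBk : B m (m + N + 1) = Aᶜ := by
        simp [hB, Nat.lt_succ_of_le (Nat.le_add_right m N)]
      have hbound : ∀ ω : ℕ → Θ, κ (ω (m + N)) (B m (m + N + 1)) ≤ 1 - ε := by
        intro ω
        rw [hBk, measure_compl hA (measure_ne_top _ _), measure_univ]
        exact tsub_le_tsub_left (hmin _) 1
      calc ∫⁻ ω in {ω | ∀ k ≤ m + N, ω k ∈ B m k}, κ (ω (m + N)) (B m (m + N + 1)) ∂(P θ)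
          ≤ ∫⁻ _ in {ω | ∀ k ≤ m + N, ω k ∈ B m k}, (1 - ε) ∂(P θ) :=
            lintegral_mono fun ω => hbound ω
        _ = (1 - ε) * P θ {ω | ∀ k ≤ m + N, ω k ∈ B m k} := by
            rw [setLIntegral_const]
        _ ≤ (1 - ε) * (1 - ε) ^ N := mul_le_mul_right ih _
        _ = (1 - ε) ^ (N + 1) := (pow_succ' _ _).symm
  have hlt1 : 1 - ε < 1 := ENNReal.sub_lt_self ENNReal.one_ne_top one_ne_zero hε0.ne'
  have htend : Filter.Tendsto (fun N => (1 - ε) ^ N) Filter.atTop (nhds 0) :=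
    ENNReal.tendsto_pow_atTop_nhds_zero_of_lt_one hlt1
  -- each tail-avoidance event is null
  have hnull : ∀ m : ℕ, P θ {ω | ∀ k, m < k → ω k ∉ A} = 0 := by
    intro m
    have hsub : ∀ N, {ω : ℕ → Θ | ∀ k, m < k → ω k ∉ A}
        ⊆ {ω | ∀ k ≤ m + N, ω k ∈ B m k} := by
      intro N ω hω k _
      by_cases h : m < k
      · simp only [hB, if_pos h]; exact hω k h
      · simp [hB, h]
    have hle : ∀ N, P θ {ω | ∀ k, m < k → ω k ∉ A} ≤ (1 - ε) ^ N :=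
      fun N => (measure_mono (hsub N)).trans (key m N)
    exact le_antisymm (ge_of_tendsto' htend hle) zero_le
  -- the complement of the target set is contained in the union
  have hcompl : {ω : ℕ → Θ | {n : ℕ | ω n ∈ A}.Infinite}ᶜ
      ⊆ ⋃ m, {ω : ℕ → Θ | ∀ k, m < k → ω k ∉ A} := by
    intro ω hω
    simp only [Set.mem_compl_iff, Set.mem_setOf_eq, Set.not_infinite] at hω
    obtain ⟨m, hm⟩ := hω.bddAbove
    exact Set.mem_iUnion.2 ⟨m, fun k hk hkA => absurd (hm hkA) (not_le.2 hk)⟩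
  have hcompl0 : P θ {ω : ℕ → Θ | {n : ℕ | ω n ∈ A}.Infinite}ᶜ = 0 :=
    measure_mono_null hcompl (measure_iUnion_null hnull)
  -- measurability of the target set
  have hSmeas : MeasurableSet {ω : ℕ → Θ | {n : ℕ | ω n ∈ A}.Infinite} := by
    have : {ω : ℕ → Θ | {n : ℕ | ω n ∈ A}.Infinite}
        = ⋂ m, ⋃ n, ⋃ (_ : m ≤ n), {ω : ℕ → Θ | ω n ∈ A} := by
      ext ω
      simp only [Set.mem_setOf_eq, Set.mem_iInter, Set.mem_iUnion]
      constructor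
      · intro h m
        obtain ⟨n, hn, hmn⟩ := h.exists_gt m
        exact ⟨n, hmn.le, hn⟩
      · intro h
        apply Set.infinite_of_not_bddAbove
        rintro ⟨b, hb⟩
        obtain ⟨n, hbn, hn⟩ := h (b + 1)
        exact absurd (hb hn) (by omega)
    rw [this]
    exact MeasurableSet.iInter fun m => MeasurableSet.iUnion fun n =>
      MeasurableSet.iUnion fun _ => measurable_pi_apply n hA
  exact (prob_compl_eq_zero_iff hSmeas).mp hcompl0

/-- **Harris recurrence (conclusion of the paper's Recurrence Lemma).**  If a Markov
kernel `κ` on `Θ` satisfies the uniform minorization `κ θ A ≥ ρ` for every `θ`, with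
`ρ ∈ (0,1]`, then under the trajectory measure `P θ` of the chain started at any `θ`,
the chain visits the set `A` infinitely often almost surely: the set of times `n` with
`ω n ∈ A` is infinite with `P θ`-probability one. -/
theorem visits_infinitely_often_of_minorization
    {Θ : Type*} [MeasurableSpace Θ]
    (κ : ProbabilityTheory.Kernel Θ Θ) [IsMarkovKernel κ]
    (A : Set Θ) (hA : MeasurableSet A)
    (ρ : ℝ) (hρpos : 0 < ρ) (hρle : ρ ≤ 1)
    (hmin : ∀ θ : Θ, ENNReal.ofReal ρ ≤ κ θ A)
    (P : Θ → Measure (ℕ → Θ)) (hP : IsTrajectoryMeasure κ P) :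
    ∀ θ : Θ, P θ {ω | {n : ℕ | ω n ∈ A}.Infinite} = 1 :=
  visits_infinitely_often_of_minorization' κ A hA ρ hρpos hρle hmin P hP.isProb hP.markov
end

section
/- Let κ be a Markov kernel on a measurable space Θ and let μ be a measure on Θ such that κ(θ, B) > 0 for every θ ∈ Θ and every measurable B with μ(B) > 0. Then there do not exist an integer d ≥ 2 and pairwise disjoint measurable sets D₀, …, D_{d−1} ⊆ Θ with μ(D_i) > 0 for every i and κ(θ, D_{(i+1) mod d}) = 1 for every i and every θ ∈ D_i. In other words, such a chain admits no d-cycle with d ≥ 2 and is aperiodic. -/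
open MeasureTheory ProbabilityTheory

/-- **Aperiodicity (paper's Aperiodicity Lemma, general form).**  Let `κ` be a Markov
kernel on `Θ` and `μ` a measure on `Θ` such that `κ θ B > 0` for every `θ` and every
measurable `B` with `μ B > 0`.  Then there is no `d`-cycle with `d ≥ 2`: there do not
exist pairwise disjoint measurable sets `D 0, …, D (d-1)`, each of positive `μ`-measure,
such that from every point of `D i` the chain moves into `D ((i+1) mod d)` with
probability one.  Hence the chain is aperiodic. -/
theorem no_cycle_of_positive_kernel
    {Θ : Type*} [MeasurableSpace Θ]
    (κ : ProbabilityTheory.Kernel Θ Θ) [IsMarkovKernel κ]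
    (μ : Measure Θ)
    (hpos : ∀ (θ : Θ) (B : Set Θ), MeasurableSet B → 0 < μ B → 0 < κ θ B) :
    ¬ ∃ (d : ℕ), 2 ≤ d ∧ ∃ D : ZMod d → Set Θ,
        (∀ i, MeasurableSet (D i)) ∧
        (Pairwise (Function.onFun Disjoint D)) ∧
        (∀ i, 0 < μ (D i)) ∧
        (∀ (i : ZMod d), ∀ θ ∈ D i, κ θ (D (i + 1)) = 1) := by
  rintro ⟨d, hd, D, hmeas, hdisj, hμ, hcyc⟩
  haveI : Fact (1 < d) := ⟨hd⟩
  obtain ⟨θ, hθ⟩ := nonempty_of_measure_ne_zero (hμ 0).ne'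
  have h01 : ((0 : ZMod d) + 1) ≠ 0 := by rw [zero_add]; exact one_ne_zero
  have hdis : Disjoint (D (0 + 1)) (D 0) := hdisj h01
  have h1 : κ θ (D (0 + 1)) = 1 := hcyc 0 θ hθ
  have hcompl : κ θ (D (0 + 1))ᶜ = 0 := by
    rw [prob_compl_eq_zero_iff (hmeas _)]; exact h1
  have h0 : 0 < κ θ (D 0) := hpos θ (D 0) (hmeas 0) (hμ 0)
  have : κ θ (D 0) ≤ κ θ (D (0 + 1))ᶜ :=
    measure_mono (Set.subset_compl_iff_disjoint_left.mpr hdis)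
  rw [hcompl] at this
  exact absurd this h0.not_ge
end

section
/- Let Θ and X be measurable spaces, h : Θ → X a measurable map, and κ : X → Θ a Markov kernel. Define the Markov kernel K on Θ by K(θ, ·) = κ(h(θ), ·). Suppose ν is a finite measure on X that is invariant for the induced marginal chain, i.e., the pushforward under h of the measure ν.bind κ (given by (ν.bind κ)(B) = ∫ κ(x, B) ν(dx)) equals ν. Then the measure π := ν.bind κ on Θ is invariant for K, that is, π.bind K = π (equivalently ∫ K(θ, B) π(dθ) = π(B) for every measurable B), and π is finite with total mass π(Θ) = ν(X). -/
open MeasureTheory ProbabilityTheory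

/-- **Invariant finite measure (paper's Lemma S.6).**  Let `h : Θ → X` be measurable and
`κ : X → Θ` a Markov kernel, and let `K` be the Markov kernel on `Θ` given by
`K θ = κ (h θ)` (the ProjMC² kernel depends on the state only through its
projected-factor component).  If `ν` is a finite measure on `X` that is invariant for the
induced marginal chain, i.e. `(ν.bind κ).map h = ν`, then `π := ν.bind κ` is invariant
for `K` (`π.bind K = π`), and `π` is a finite measure with total mass
`π Θ = ν X`. -/
theorem invariant_measure_of_marginal_invariant
    {Θ X : Type*} [MeasurableSpace Θ] [MeasurableSpace X]
    (h : Θ → X) (hh : Measurable h)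
    (κ : ProbabilityTheory.Kernel X Θ) [IsMarkovKernel κ]
    (K : Θ → Measure Θ) (hK : ∀ θ, K θ = κ (h θ))
    (ν : Measure X) [IsFiniteMeasure ν]
    (hinv : (ν.bind (fun x => κ x)).map h = ν) :
    (ν.bind (fun x => κ x)).bind K = ν.bind (fun x => κ x) ∧
    IsFiniteMeasure (ν.bind (fun x => κ x)) ∧
    (ν.bind (fun x => κ x)) Set.univ = ν Set.univ := by
  have hκm : Measurable (fun x => κ x) := κ.measurable
  have hmass : (ν.bind (fun x => κ x)) Set.univ = ν Set.univ := by
    rw [Measure.bind_apply MeasurableSet.univ hκm.aemeasurable]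
    simp [measure_univ]
  refine ⟨?_, ⟨by rw [hmass]; exact measure_lt_top ν _⟩, hmass⟩
  have hKm : Measurable K := by
    have : K = (fun x => κ x) ∘ h := funext fun θ => hK θ
    rw [this]; exact hκm.comp hh
  ext s hs
  rw [Measure.bind_apply hs hKm.aemeasurable]
  calc ∫⁻ θ, K θ s ∂(ν.bind fun x => κ x)
      = ∫⁻ θ, κ (h θ) s ∂(ν.bind fun x => κ x) := by simp_rw [hK]
    _ = ∫⁻ x, κ x s ∂((ν.bind fun x => κ x).map h) := by
        rw [lintegral_map (Kernel.measurable_coe κ hs) hh]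
    _ = ∫⁻ x, κ x s ∂ν := by rw [hinv]
    _ = (ν.bind fun x => κ x) s := (Measure.bind_apply hs hκm.aemeasurable).symm
end

section
/- Let κ be a Markov kernel on a measurable space Θ satisfying the Doeblin minorization condition: there exist ε ∈ (0, 1] and a probability measure ν on Θ such that κ(θ, A) ≥ ε · ν(A) for every θ ∈ Θ and every measurable A. Then κ admits a unique invariant probability measure π (π.bind κ = π), and for every θ ∈ Θ, every measurable A, and every n ≥ 1, |κ^{∘n}(θ, A) − π(A)| ≤ (1 − ε)^n, where κ^{∘n} denotes the n-fold composition of κ. In particular the n-step distributions converge to π in total variation, uniformly in the initial point. -/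
open MeasureTheory ProbabilityTheory

/-- The `n`-fold composition of a kernel with itself: `kernelIterate κ 0 = Kernel.id`
and `kernelIterate κ (n+1) = κ ∘ₖ kernelIterate κ n`, so that
`kernelIterate κ (n+1) θ B = ∫ κ θ' B ∂(kernelIterate κ n θ)`. -/
noncomputable def kernelIterate {Θ : Type*} [MeasurableSpace Θ]
    (κ : ProbabilityTheory.Kernel Θ Θ) : ℕ → ProbabilityTheory.Kernel Θ Θ
  | 0 => ProbabilityTheory.Kernel.id
  | n + 1 => κ ∘ₖ kernelIterate κ n

namespace DoeblinAux

open ENNReal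

variable {Θ : Type*} [MeasurableSpace Θ] (κ : ProbabilityTheory.Kernel Θ Θ)

/-- One step of the chain at the level of measures. -/
noncomputable def step (μ : Measure Θ) : Measure Θ := μ.bind (fun θ => κ θ)

lemma step_apply (μ : Measure Θ) {A : Set Θ} (hA : MeasurableSet A) :
    step κ μ A = ∫⁻ θ, κ θ A ∂μ :=
  Measure.bind_apply hA κ.measurable.aemeasurable

lemma step_univ [IsMarkovKernel κ] (μ : Measure Θ) :
    step κ μ Set.univ = μ Set.univ := by
  rw [step_apply κ μ MeasurableSet.univ]
  simp

lemma step_add (μ σ : Measure Θ) : step κ (μ + σ) = step κ μ + step κ σ := by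
  ext A hA
  rw [Measure.add_apply, step_apply κ _ hA, step_apply κ _ hA, step_apply κ _ hA,
    lintegral_add_measure]

lemma step_iterate_add (n : ℕ) (μ σ : Measure Θ) :
    (step κ)^[n] (μ + σ) = (step κ)^[n] μ + (step κ)^[n] σ := by
  induction n generalizing μ σ with
  | zero => simp
  | succ n ih =>
    rw [Function.iterate_succ_apply, Function.iterate_succ_apply,
      Function.iterate_succ_apply, step_add, ih]

lemma step_iterate_univ [IsMarkovKernel κ] (n : ℕ) (μ : Measure Θ) :
    (step κ)^[n] μ Set.univ = μ Set.univ := by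
  induction n with
  | zero => simp
  | succ n ih => rw [Function.iterate_succ_apply', step_univ, ih]

/-- The Doeblin minorization lifted to measures: if `μ` has total mass `c`, then
`step κ μ` dominates `(c * ε) • ν`. -/
lemma doeblin_measure [IsMarkovKernel κ] {e : ℝ≥0∞} {ν : Measure Θ}
    (hdoe : ∀ (θ : Θ) (A : Set Θ), MeasurableSet A → e * ν A ≤ κ θ A)
    (μ : Measure Θ) : (μ Set.univ * e) • ν ≤ step κ μ := by
  rw [Measure.le_iff]
  intro s hs
  rw [step_apply κ μ hs, Measure.smul_apply, smul_eq_mul]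
  calc μ Set.univ * e * ν s = ∫⁻ _, e * ν s ∂μ := by
        rw [lintegral_const]; ring
    _ ≤ ∫⁻ θ, κ θ s ∂μ := lintegral_mono fun θ => hdoe θ s hs

/-- The key contraction estimate: two initial measures with the same finite total mass `c`
stay within `c * (1 - ε)^n` of each other (setwise) after `n` steps. -/
lemma contraction [IsMarkovKernel κ] (ε : ℝ) (hεpos : 0 < ε)
    (ν : Measure Θ) [IsProbabilityMeasure ν]
    (hdoe : ∀ (θ : Θ) (A : Set Θ), MeasurableSet A → ENNReal.ofReal ε * ν A ≤ κ θ A) :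
    ∀ (n : ℕ) (μ₁ μ₂ : Measure Θ), μ₁ Set.univ = μ₂ Set.univ → μ₁ Set.univ ≠ ⊤ →
      ∀ A : Set Θ, MeasurableSet A →
      |((step κ)^[n] μ₁ A).toReal - ((step κ)^[n] μ₂ A).toReal|
        ≤ (μ₁ Set.univ).toReal * (1 - ε) ^ n := by
  intro n
  induction n with
  | zero =>
    intro μ₁ μ₂ hmass hfin A hA
    simp only [Function.iterate_zero, id_eq, pow_zero, mul_one]
    rw [abs_sub_le_iff]
    constructor
    · have h1 : (μ₁ A).toReal ≤ (μ₁ Set.univ).toReal :=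
        ENNReal.toReal_mono hfin (measure_mono (Set.subset_univ A))
      have h2 : 0 ≤ (μ₂ A).toReal := ENNReal.toReal_nonneg
      linarith
    · have h1 : (μ₂ A).toReal ≤ (μ₁ Set.univ).toReal := by
        rw [hmass]
        exact ENNReal.toReal_mono (hmass ▸ hfin) (measure_mono (Set.subset_univ A))
      have h2 : 0 ≤ (μ₁ A).toReal := ENNReal.toReal_nonneg
      linarith
  | succ n ih =>
    intro μ₁ μ₂ hmass hfin A hA
    set e : ℝ≥0∞ := ENNReal.ofReal ε with he
    set c : ℝ≥0∞ := μ₁ Set.univ with hc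
    have heT : e ≠ ⊤ := ENNReal.ofReal_ne_top
    have hceT : c * e ≠ ⊤ := ENNReal.mul_ne_top hfin heT
    set s0 : Measure Θ := (c * e) • ν with hs0
    have hs0univ : s0 Set.univ = c * e := by
      rw [hs0, Measure.smul_apply, smul_eq_mul, measure_univ, mul_one]
    haveI : IsFiniteMeasure s0 := ⟨by rw [hs0univ]; exact hceT.lt_top⟩
    have h1 : s0 ≤ step κ μ₁ := doeblin_measure κ hdoe μ₁
    have h2 : s0 ≤ step κ μ₂ := by
      have := doeblin_measure κ hdoe μ₂
      rwa [← hmass] at this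
    set σ₁ : Measure Θ := step κ μ₁ - s0 with hσ₁
    set σ₂ : Measure Θ := step κ μ₂ - s0 with hσ₂
    have hd1 : σ₁ + s0 = step κ μ₁ := Measure.sub_add_cancel_of_le h1
    have hd2 : σ₂ + s0 = step κ μ₂ := Measure.sub_add_cancel_of_le h2
    -- masses
    have hσ₁u : σ₁ Set.univ + c * e = c := by
      have := congrArg (fun m : Measure Θ => m Set.univ) hd1
      simpa [Measure.add_apply, hs0univ, step_univ] using this
    have hσ₂u : σ₂ Set.univ + c * e = c := by
      have := congrArg (fun m : Measure Θ => m Set.univ) hd2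
      simpa [Measure.add_apply, hs0univ, step_univ, ← hmass] using this
    have hσmass : σ₁ Set.univ = σ₂ Set.univ := by
      have := hσ₁u.trans hσ₂u.symm
      exact (ENNReal.add_left_inj hceT).mp this
    have hσ₁fin : σ₁ Set.univ ≠ ⊤ := by
      have hle : σ₁ Set.univ ≤ c := le_of_le_of_eq le_self_add hσ₁u
      exact (hle.trans_lt hfin.lt_top).ne
    -- rewrite the iterates
    have hit : ∀ μ : Measure Θ, σ₁ + s0 = step κ μ →
        (step κ)^[n + 1] μ = (step κ)^[n] σ₁ + (step κ)^[n] s0 := by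
      intro μ h
      rw [Function.iterate_succ_apply, ← h, step_iterate_add]
    have hit1 : (step κ)^[n + 1] μ₁ = (step κ)^[n] σ₁ + (step κ)^[n] s0 := hit μ₁ hd1
    have hit2 : (step κ)^[n + 1] μ₂ = (step κ)^[n] σ₂ + (step κ)^[n] s0 := by
      rw [Function.iterate_succ_apply, ← hd2, step_iterate_add]
    -- finiteness of the pieces on A
    have fin_of : ∀ τ : Measure Θ, τ Set.univ ≠ ⊤ → (step κ)^[n] τ A ≠ ⊤ := by
      intro τ hτ
      have h1 : (step κ)^[n] τ A ≤ (step κ)^[n] τ Set.univ :=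
        measure_mono (Set.subset_univ A)
      rw [step_iterate_univ] at h1
      exact (h1.trans_lt hτ.lt_top).ne
    have hf1 : (step κ)^[n] σ₁ A ≠ ⊤ := fin_of σ₁ hσ₁fin
    have hf2 : (step κ)^[n] σ₂ A ≠ ⊤ := fin_of σ₂ (hσmass ▸ hσ₁fin)
    have hf0 : (step κ)^[n] s0 A ≠ ⊤ := fin_of s0 (hs0univ ▸ hceT)
    have key : ((step κ)^[n + 1] μ₁ A).toReal - ((step κ)^[n + 1] μ₂ A).toReal
        = ((step κ)^[n] σ₁ A).toReal - ((step κ)^[n] σ₂ A).toReal := by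
      rw [hit1, hit2, Measure.add_apply, Measure.add_apply,
        ENNReal.toReal_add hf1 hf0, ENNReal.toReal_add hf2 hf0]
      ring
    rw [key]
    -- apply the inductive hypothesis
    have hih := ih σ₁ σ₂ hσmass hσ₁fin A hA
    -- compute σ₁'s mass in real terms
    have hmassreal : (σ₁ Set.univ).toReal = c.toReal * (1 - ε) := by
      have h := congrArg ENNReal.toReal hσ₁u
      rw [ENNReal.toReal_add hσ₁fin hceT, ENNReal.toReal_mul,
        ENNReal.toReal_ofReal hεpos.le] at h
      have : (σ₁ Set.univ).toReal = c.toReal - c.toReal * ε := by linarith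
      rw [this]; ring
    rw [hmassreal] at hih
    calc |((step κ)^[n] σ₁ A).toReal - ((step κ)^[n] σ₂ A).toReal|
        ≤ c.toReal * (1 - ε) * (1 - ε) ^ n := hih
      _ = c.toReal * (1 - ε) ^ (n + 1) := by ring

end DoeblinAux

/-- **Doeblin condition ⇒ unique stationary law and uniform geometric TV convergence**
(the convergence mechanism behind the paper's Theorem 2).  If a Markov kernel `κ` on `Θ`
satisfies `κ θ A ≥ ε · ν A` for all `θ` and all measurable `A`, for some `ε ∈ (0,1]` and
a probability measure `ν`, then `κ` admits a unique invariant probability measure `π`,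
and `|κ^{∘n} θ A − π A| ≤ (1 − ε)^n` for every initial point `θ`, every measurable `A`
and every `n ≥ 1`. -/
theorem doeblin_unique_invariant_and_geometric_convergence
    {Θ : Type*} [MeasurableSpace Θ]
    (κ : ProbabilityTheory.Kernel Θ Θ) [IsMarkovKernel κ]
    (ε : ℝ) (hεpos : 0 < ε) (hεle : ε ≤ 1)
    (ν : Measure Θ) [IsProbabilityMeasure ν]
    (hdoeblin : ∀ (θ : Θ) (A : Set Θ), MeasurableSet A → ENNReal.ofReal ε * ν A ≤ κ θ A) :
    ∃ π : Measure Θ, IsProbabilityMeasure π ∧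
      π.bind (fun θ => κ θ) = π ∧
      (∀ π' : Measure Θ, IsProbabilityMeasure π' → π'.bind (fun θ => κ θ) = π' → π' = π) ∧
      (∀ (θ : Θ) (A : Set Θ) (n : ℕ), MeasurableSet A → 1 ≤ n →
        |(kernelIterate κ n θ A).toReal - (π A).toReal| ≤ (1 - ε) ^ n) := by
  classical
  set e : ENNReal := ENNReal.ofReal ε with he
  have he1 : e ≤ 1 := ENNReal.ofReal_le_one.mpr hεle
  have he0 : e ≠ 0 := by
    simp only [he, ne_eq, ENNReal.ofReal_eq_zero, not_le]
    exact hεpos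
  have heT : e ≠ ⊤ := ENNReal.ofReal_ne_top
  -- the sequence of residual measures
  let a : ℕ → Measure Θ := fun k =>
    Nat.rec ν (fun k ak => DoeblinAux.step κ ak - (((1 - e) ^ k * e) • ν)) k
  have ha0 : a 0 = ν := rfl
  have haS : ∀ k, a (k + 1) = DoeblinAux.step κ (a k) - (((1 - e) ^ k * e) • ν) :=
    fun k => rfl
  have hsubuniv : ∀ k : ℕ, (((1 - e) ^ k * e) • ν) Set.univ = (1 - e) ^ k * e := by
    intro k
    rw [Measure.smul_apply, smul_eq_mul, measure_univ, mul_one]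
  have hsubfin : ∀ k : ℕ, (1 - e) ^ k * e ≠ ⊤ := by
    intro k
    exact ENNReal.mul_ne_top (ENNReal.pow_ne_top (by
      exact (tsub_le_self.trans_lt ENNReal.one_lt_top).ne)) heT
  haveI hsubinst : ∀ k : ℕ, IsFiniteMeasure (((1 - e) ^ k * e) • ν) := by
    intro k
    exact ⟨by rw [hsubuniv k]; exact (hsubfin k).lt_top⟩
  have hee : (1 - e) + e = 1 := tsub_add_cancel_of_le he1
  -- masses and decomposition, by simultaneous induction
  have hmass : ∀ k, a k Set.univ = (1 - e) ^ k ∧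
      a (k + 1) + (((1 - e) ^ k * e) • ν) = DoeblinAux.step κ (a k) := by
    intro k
    induction k with
    | zero =>
      constructor
      · rw [ha0, measure_univ, pow_zero]
      · rw [haS 0]
        haveI := hsubinst 0
        refine Measure.sub_add_cancel_of_le ?_
        have h := DoeblinAux.doeblin_measure κ hdoeblin (a 0)
        rw [ha0, measure_univ, one_mul] at h
        rw [pow_zero, one_mul, ha0]
        exact h
    | succ k ih =>
      obtain ⟨ihm, ihd⟩ := ih
      have hmk : a (k + 1) Set.univ = (1 - e) ^ (k + 1) := by
        have h := congrArg (fun m : Measure Θ => m Set.univ) ihd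
        simp only [Measure.add_apply, hsubuniv, DoeblinAux.step_univ, ihm] at h
        have h2 : (1 - e) ^ (k + 1) + (1 - e) ^ k * e = (1 - e) ^ k := by
          rw [pow_succ, ← mul_add, hee, mul_one]
        exact (ENNReal.add_left_inj (hsubfin k)).mp (h.trans h2.symm)
      refine ⟨hmk, ?_⟩
      rw [haS (k + 1)]
      haveI := hsubinst (k + 1)
      refine Measure.sub_add_cancel_of_le ?_
      have := DoeblinAux.doeblin_measure κ hdoeblin (a (k + 1))
      rwa [hmk] at this
  -- define π
  set π : Measure Θ := e • Measure.sum a with hπ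
  have hπapp : ∀ {A : Set Θ}, MeasurableSet A → π A = e * ∑' k, a k A := by
    intro A hA
    rw [hπ, Measure.smul_apply, smul_eq_mul, Measure.sum_apply _ hA]
  have hgeom : ∑' k : ℕ, (1 - e) ^ k = e⁻¹ := by
    rw [ENNReal.tsum_geometric, ENNReal.sub_sub_cancel ENNReal.one_ne_top he1]
  have hπuniv : π Set.univ = 1 := by
    rw [hπapp MeasurableSet.univ]
    have : ∑' k : ℕ, a k Set.univ = e⁻¹ := by
      rw [← hgeom]
      exact tsum_congr fun k => (hmass k).1
    rw [this, ENNReal.mul_inv_cancel he0 heT]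
  haveI hπprob : IsProbabilityMeasure π := ⟨hπuniv⟩
  -- invariance
  have hstep_sum : DoeblinAux.step κ (Measure.sum a)
      = Measure.sum (fun k => DoeblinAux.step κ (a k)) := by
    ext A hA
    rw [DoeblinAux.step_apply κ _ hA, lintegral_sum_measure, Measure.sum_apply _ hA]
    exact tsum_congr fun k => (DoeblinAux.step_apply κ (a k) hA).symm
  have hstep_smul : DoeblinAux.step κ π = e • DoeblinAux.step κ (Measure.sum a) := by
    ext A hA
    rw [DoeblinAux.step_apply κ _ hA, Measure.smul_apply, smul_eq_mul,
      DoeblinAux.step_apply κ _ hA, hπ, lintegral_smul_measure, smul_eq_mul]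
  have hinv : DoeblinAux.step κ π = π := by
    rw [hstep_smul, hstep_sum]
    ext A hA
    rw [Measure.smul_apply, smul_eq_mul, Measure.sum_apply _ hA, hπapp hA]
    congr 1
    have hterm : ∀ k, DoeblinAux.step κ (a k) A
        = a (k + 1) A + (1 - e) ^ k * (e * ν A) := by
      intro k
      rw [← (hmass k).2, Measure.add_apply, Measure.smul_apply, smul_eq_mul, mul_assoc]
    calc ∑' k, DoeblinAux.step κ (a k) A
        = ∑' k, (a (k + 1) A + (1 - e) ^ k * (e * ν A)) := tsum_congr hterm
      _ = (∑' k, a (k + 1) A) + (∑' k : ℕ, (1 - e) ^ k) * (e * ν A) := by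
          rw [ENNReal.tsum_add, ENNReal.tsum_mul_right]
      _ = (∑' k, a (k + 1) A) + ν A := by
          rw [hgeom, ← mul_assoc, ENNReal.inv_mul_cancel he0 heT, one_mul]
      _ = ∑' k, a k A := by
          rw [add_comm]
          exact (tsum_eq_zero_add' (f := fun k => a k A) ENNReal.summable).symm
  have hπfin : ∀ A : Set Θ, π A ≠ ⊤ := fun A =>
    ((measure_mono (Set.subset_univ A)).trans_lt (hπuniv ▸ ENNReal.one_lt_top)).ne
  -- identification of the kernel iterates
  have hker : ∀ (n : ℕ) (θ : Θ),
      kernelIterate κ n θ = (DoeblinAux.step κ)^[n] (Measure.dirac θ) := by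
    intro n θ
    induction n with
    | zero => simp [kernelIterate, Kernel.id_apply]
    | succ n ih =>
      rw [Function.iterate_succ_apply', ← ih]
      show (κ ∘ₖ kernelIterate κ n) θ = _
      rw [Kernel.comp_apply]
      rfl
  have hfix : ∀ n : ℕ, (DoeblinAux.step κ)^[n] π = π :=
    fun n => Function.iterate_fixed hinv n
  have hcontr := DoeblinAux.contraction κ ε hεpos ν hdoeblin
  refine ⟨π, hπprob, hinv, ?_, ?_⟩
  · -- uniqueness
    intro π' hπ' hπ'inv
    haveI := hπ'
    ext A hA
    have hbound : ∀ n : ℕ, |(π' A).toReal - (π A).toReal| ≤ (1 - ε) ^ n := by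
      intro n
      have hfix' : (DoeblinAux.step κ)^[n] π' = π' :=
        Function.iterate_fixed hπ'inv n
      have := hcontr n π' π (by rw [measure_univ, measure_univ]) (by
        rw [measure_univ]; exact ENNReal.one_ne_top) A hA
      rwa [hfix', hfix n, measure_univ, ENNReal.toReal_one, one_mul] at this
    have htend : Filter.Tendsto (fun n : ℕ => (1 - ε) ^ n) Filter.atTop (nhds 0) := by
      apply tendsto_pow_atTop_nhds_zero_of_abs_lt_one
      rw [abs_lt]; constructor <;> linarith
    have h0 : |(π' A).toReal - (π A).toReal| ≤ 0 :=
      ge_of_tendsto' htend hbound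
    have heq : (π' A).toReal = (π A).toReal := by
      have := abs_nonneg ((π' A).toReal - (π A).toReal)
      have h := le_antisymm h0 this
      rw [abs_eq_zero] at h
      linarith
    exact (ENNReal.toReal_eq_toReal_iff'
      ((measure_mono (Set.subset_univ A)).trans_lt
        ((measure_univ (μ := π')) ▸ ENNReal.one_lt_top)).ne (hπfin A)).mp heq
  · -- convergence
    intro θ A n hA _
    have := hcontr n (Measure.dirac θ) π (by rw [measure_univ, measure_univ]) (by
      rw [measure_univ]; exact ENNReal.one_ne_top) A hA
    rwa [← hker n θ, hfix n, measure_univ, ENNReal.toReal_one, one_mul] at this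
end
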